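/- arXiv:2009.05245 — 2 statements merged into one kernel-verified Lean document; each statement's English description precedes it below -/
import Mathlib

section
/- Let (P,≻,q) be a problem and k > 1. Every blocking student for the outcome β^k(P,≻,q) of the constrained Boston mechanism under (P,≻,q) is a manipulating student of β^k at (P,≻,q). -/
/-!
School choice framework following Bonkoungou–Nesterov,
"Reforms meet fairness concerns in school and college admissions".

Students `I` and schools `S` are finite types with `|I| > |S|`.
A strict preference relation of a student over `S ∪ {∅}` is represented by a list
of `Option S` containing every element exactly once (earlier = more preferred);
`none` is the outside option.  A strict priority order of a school is a list of
`I` containing every student exactly once (earlier = higher priority).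
-/

namespace SchoolChoice

variable {I S : Type*} [Fintype I] [DecidableEq I] [Fintype S] [DecidableEq S]

/-- `p` is a strict preference relation on `S ∪ {∅}`: a ranking list containing every
element of `Option S` exactly once. -/
def ValidPref (p : List (Option S)) : Prop := p.Nodup ∧ ∀ x : Option S, x ∈ p

/-- `pr` is a strict priority order: a ranking list containing every student exactly once. -/
def ValidPrio (pr : List I) : Prop := pr.Nodup ∧ ∀ i : I, i ∈ pr

/-- `a` is strictly preferred to `b` under the preference relation `p`. -/
def prefLt (p : List (Option S)) (a b : Option S) : Prop := p.idxOf a < p.idxOf b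

/-- `i` has strictly higher priority than `j` under the priority order `pr`. -/
def prioLt (pr : List I) (i j : I) : Prop := pr.idxOf i < pr.idxOf j

instance (p : List (Option S)) (a b : Option S) : Decidable (prefLt p a b) :=
  inferInstanceAs (Decidable (_ < _))

instance (pr : List I) (i j : I) : Decidable (prioLt pr i j) :=
  inferInstanceAs (Decidable (_ < _))

/-- The acceptable schools of `p` (those preferred to the outside option), in preference
order. -/
def acceptables (p : List (Option S)) : List S := (p.takeWhile Option.isSome).filterMap id

/-- The truncation of `p` after its `k`-th acceptable school: the preference relation
listing, in the same order, only the `min k _` most-preferred acceptable schools of `p`,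
all other schools being unacceptable (kept below `none` in their original order). -/
def truncate (p : List (Option S)) (k : ℕ) : List (Option S) :=
  ((acceptables p).take k).map some ++
    none :: p.filter (fun x => decide (x ≠ none ∧ x ∉ ((acceptables p).take k).map some))

/-- `μ` is a matching: it respects the capacities `q`. -/
def IsMatching (q : S → ℕ) (μ : I → Option S) : Prop :=
  ∀ s : S, (Finset.univ.filter (fun i => μ i = some s)).card ≤ q s

/-- The pair `(i, s)` blocks `μ` under the problem `(P, prio, q)`. -/
def Blocks (P : I → List (Option S)) (prio : S → List I) (q : S → ℕ)
    (μ : I → Option S) (i : I) (s : S) : Prop :=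
  prefLt (P i) (some s) (μ i) ∧
    ((Finset.univ.filter (fun j => μ j = some s)).card < q s ∨
      ∃ j : I, μ j = some s ∧ prioLt (prio s) i j)

/-- `i` is a blocking student for `μ` under `(P, prio, q)`. -/
def BlockingStudent (P : I → List (Option S)) (prio : S → List I) (q : S → ℕ)
    (μ : I → Option S) (i : I) : Prop :=
  ∃ s : S, Blocks P prio q μ i s

/-- `μ` is individually rational under `P`. -/
def IndividuallyRational (P : I → List (Option S)) (μ : I → Option S) : Prop :=
  ∀ i : I, ¬ prefLt (P i) none (μ i)

/-- `μ` is stable at `(P, prio, q)`. -/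
def IsStable (P : I → List (Option S)) (prio : S → List I) (q : S → ℕ)
    (μ : I → Option S) : Prop :=
  IndividuallyRational P μ ∧ ∀ i : I, ¬ BlockingStudent P prio q μ i

/-- The number of blocking students for `μ` under `(P, prio, q)`. -/
noncomputable def numBlocking (P : I → List (Option S)) (prio : S → List I) (q : S → ℕ)
    (μ : I → Option S) : ℕ :=
  {i : I | BlockingStudent P prio q μ i}.ncard

/-! ### The Gale–Shapley student-proposing deferred acceptance mechanism

The state `σ : I → ℕ` records, for each student, how many of her acceptable schools
have already rejected her; she currently applies to the `σ i`-th school on her list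
(if any).  At each round every school tentatively keeps the `q s` highest-priority
students among its current applicants and rejects the rest, who move on. -/

/-- The school student `i` currently applies to. -/
def daTarget (P : I → List (Option S)) (σ : I → ℕ) (i : I) : Option S :=
  (acceptables (P i))[σ i]?

/-- The students tentatively held by school `s`: the `q s` highest-priority current
applicants. -/
def daHeld (P : I → List (Option S)) (prio : S → List I) (q : S → ℕ)
    (σ : I → ℕ) (s : S) : List I :=
  ((prio s).filter (fun i => decide (daTarget P σ i = some s))).take (q s)

/-- One round of deferred acceptance: every rejected student moves to her next choice. -/
def daStep (P : I → List (Option S)) (prio : S → List I) (q : S → ℕ)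
    (σ : I → ℕ) : I → ℕ := fun i =>
  match daTarget P σ i with
  | none => σ i
  | some s => if i ∈ daHeld P prio q σ s then σ i else σ i + 1

/-- The Gale–Shapley (student-proposing deferred acceptance) mechanism.  Iterating the
round map `|I| * |S| + 1` times is guaranteed to reach the terminal state. -/
def GS (P : I → List (Option S)) (prio : S → List I) (q : S → ℕ) : I → Option S :=
  fun i =>
    let σ := (daStep P prio q)^[Fintype.card I * Fintype.card S + 1] (fun _ => 0)
    match daTarget P σ i with
    | none => none
    | some s => if i ∈ daHeld P prio q σ s then some s else none

/-- The constrained Gale–Shapley mechanism `GS^k`. -/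
def GSk (k : ℕ) (P : I → List (Option S)) (prio : S → List I) (q : S → ℕ) : I → Option S :=
  GS (fun i => truncate (P i) k) prio q

/-! ### The Boston (immediate acceptance) mechanism -/

/-- Round `t` of the Boston mechanism: each not-yet-accepted student applies to her
`t`-th ranked acceptable school (0-indexed), and each school permanently accepts, up to
its remaining capacity, its highest-priority new applicants. -/
def bostonRound (P : I → List (Option S)) (prio : S → List I) (q : S → ℕ)
    (μ : I → Option S) (t : ℕ) : I → Option S := fun i =>
  match μ i with
  | some s => some s
  | none =>
    match (acceptables (P i))[t]? with
    | none => none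
    | some s =>
      if i ∈ ((prio s).filter
            (fun j => decide (μ j = none ∧ (acceptables (P j))[t]? = some s))).take
          (q s - (Finset.univ.filter (fun j => μ j = some s)).card)
      then some s else none

/-- The Boston (immediate acceptance) mechanism. -/
def Boston (P : I → List (Option S)) (prio : S → List I) (q : S → ℕ) : I → Option S :=
  (List.range (Fintype.card S)).foldl (bostonRound P prio q) (fun _ => none)

/-- The constrained Boston mechanism `β^k`. -/
def Bostonk (k : ℕ) (P : I → List (Option S)) (prio : S → List I) (q : S → ℕ) :
    I → Option S :=
  Boston (fun i => truncate (P i) k) prio q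

/-! ### The first-preference-first mechanism -/

/-- The adjusted priority profile: each first-preference-first school (member of `fpf`)
ranks students first by the rank they assign to it under `P` (counting the ranking of the
outside option as well), ties broken by the original priority; equal-preference schools
keep their original priority. -/
def fpfPrio (fpf : Finset S) (P : I → List (Option S)) (prio : S → List I) : S → List I :=
  fun s =>
    if s ∈ fpf then
      (List.range (Fintype.card S + 1)).flatMap
        (fun r => (prio s).filter (fun i => decide ((P i).idxOf (some s) = r)))
    else prio s

/-- The first-preference-first mechanism with set `fpf` of first-preference-first
schools: Gale–Shapley run on the adjusted priorities. -/
def FPF (fpf : Finset S) (P : I → List (Option S)) (prio : S → List I) (q : S → ℕ) :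
    I → Option S :=
  GS P (fpfPrio fpf P prio) q

/-- The constrained first-preference-first mechanism `FPF^k`. -/
def FPFk (fpf : Finset S) (k : ℕ) (P : I → List (Option S)) (prio : S → List I)
    (q : S → ℕ) : I → Option S :=
  FPF fpf (fun i => truncate (P i) k) prio q

/-! ### Manipulation and equilibrium notions -/

/-- Student `i` is a manipulating student of the mechanism `φ` (with priorities and
capacities fixed) at the true profile `P`. -/
def ManipulatingStudent (φ : (I → List (Option S)) → I → Option S)
    (P : I → List (Option S)) (i : I) : Prop :=
  ∃ Q : List (Option S), ValidPref Q ∧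
    prefLt (P i) (φ (Function.update P i Q) i) (φ P i)

/-- The mechanism `φ` is not manipulable at `P`. -/
def NotManipulable (φ : (I → List (Option S)) → I → Option S)
    (P : I → List (Option S)) : Prop :=
  ∀ i : I, ¬ ManipulatingStudent φ P i

/-- `P'` is a Nash equilibrium of the game `(φ, P)` in which the sophisticated students
are the members of `M` (who may misreport, and best respond) and all other (sincere)
students report truthfully. -/
def NashEq (φ : (I → List (Option S)) → I → Option S) (P : I → List (Option S))
    (M : Finset I) (P' : I → List (Option S)) : Prop :=
  (∀ i, ValidPref (P' i)) ∧ (∀ i ∉ M, P' i = P i) ∧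
    ∀ i ∈ M, ∀ Q : List (Option S), ValidPref Q →
      ¬ prefLt (P i) (φ (Function.update P' i Q) i) (φ P' i)

/-! ### Semi-sophisticated students -/

/-- Student `i` is guaranteed her first choice `s`: `s` is her most-preferred acceptable
school and `i` is among the `q s` highest-priority students at `s`. -/
def GuaranteedFirstChoice (P : I → List (Option S)) (prio : S → List I) (q : S → ℕ)
    (i : I) (s : S) : Prop :=
  (acceptables (P i)).head? = some s ∧ (prio s).idxOf i < q s

instance (P : I → List (Option S)) (prio : S → List I) (q : S → ℕ) (i : I) (s : S) :
    Decidable (GuaranteedFirstChoice P prio q i s) :=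
  inferInstanceAs (Decidable (_ ∧ _))

/-- School `s` is competitive: at least `q s` students are guaranteed their first
choice `s`. -/
def Competitive (P : I → List (Option S)) (prio : S → List I) (q : S → ℕ) (s : S) : Prop :=
  q s ≤ (Finset.univ.filter (fun i => GuaranteedFirstChoice P prio q i s)).card

instance (P : I → List (Option S)) (prio : S → List I) (q : S → ℕ) (s : S) :
    Decidable (Competitive P prio q s) :=
  inferInstanceAs (Decidable (_ ≤ _))

/-- `P'` is a Nash equilibrium of the game `(GS^ℓ, P)` with semi-sophisticated students:
every student guaranteed her first choice reports truthfully; every other student reports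
truthfully if she has at most `ℓ` acceptable schools or all her acceptable schools are
competitive, and otherwise lists as acceptable, in the order given by her true preference,
only her acceptable schools that are not competitive. -/
def SemiSophProfile (ℓ : ℕ) (P : I → List (Option S)) (prio : S → List I) (q : S → ℕ)
    (P' : I → List (Option S)) : Prop :=
  ∀ i : I,
    ((∃ s : S, GuaranteedFirstChoice P prio q i s) → P' i = P i) ∧
    (¬ (∃ s : S, GuaranteedFirstChoice P prio q i s) →
      (((acceptables (P i)).length ≤ ℓ ∨ ∀ s ∈ acceptables (P i), Competitive P prio q s) →
          P' i = P i) ∧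
      (¬ ((acceptables (P i)).length ≤ ℓ ∨
            ∀ s ∈ acceptables (P i), Competitive P prio q s) →
          acceptables (P' i) =
            (acceptables (P i)).filter (fun s => decide (¬ Competitive P prio q s))))



/-! ### Auxiliary lemmas for the proof of Statement 9 -/

lemma takeWhile_map_some_append (l : List S) (r : List (Option S)) :
    (l.map some ++ none :: r).takeWhile Option.isSome = l.map some := by
  induction l with
  | nil => simp [List.takeWhile]
  | cons a t ih => simpa [List.takeWhile] using ih

lemma acceptables_truncate (p : List (Option S)) (k : ℕ) :
    acceptables (truncate p k) = (acceptables p).take k := by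
  show ((truncate p k).takeWhile Option.isSome).filterMap id = _
  rw [truncate, takeWhile_map_some_append, List.filterMap_map]
  simp [Function.comp_def]

lemma take_filter_eq_of_agree {α : Type*} (l : List α) (p ph : α → Bool) (a : α)
    (hagree : ∀ x, x ≠ a → p x = ph x) (hpa : ph a = true) (n : ℕ)
    (ha : a ∉ (l.filter ph).take n) :
    (l.filter p).take n = (l.filter ph).take n := by
  induction l generalizing n with
  | nil => simp
  | cons x xs ih =>
    by_cases hx : x = a
    · subst hx
      rw [List.filter_cons_of_pos hpa] at ha ⊢
      cases n with
      | zero => simp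
      | succ m =>
        rw [List.take_succ_cons] at ha
        exact absurd (List.mem_cons_self) ha
    · have hpx : p x = ph x := hagree x hx
      cases hb : ph x with
      | false =>
        rw [List.filter_cons_of_neg (by simp [hpx.trans hb]),
          List.filter_cons_of_neg (by simp [hb])]
        exact ih n (by rwa [List.filter_cons_of_neg (by simp [hb])] at ha)
      | true =>
        rw [List.filter_cons_of_pos (hpx.trans hb), List.filter_cons_of_pos hb]
        cases n with
        | zero => simp
        | succ m =>
          rw [List.take_succ_cons, List.take_succ_cons]
          have ha' : a ∉ ((xs.filter ph).take m) := by
            rw [List.filter_cons_of_pos hb, List.take_succ_cons] at ha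
            exact fun h => ha (List.mem_cons_of_mem _ h)
          rw [ih m ha']

lemma nodup_pairwise_indexOf {α : Type*} [DecidableEq α] (l : List α) (h : l.Nodup) :
    l.Pairwise (fun a b => l.idxOf a < l.idxOf b) := by
  rw [List.pairwise_iff_getElem]
  intro i j hi hj hij
  rw [List.Nodup.idxOf_getElem h i hi, List.Nodup.idxOf_getElem h j hj]
  exact hij

lemma bostonRound_of_some (R : I → List (Option S)) (prio : S → List I) (q : S → ℕ)
    (μ : I → Option S) (t : ℕ) {j : I} {s : S} (h : μ j = some s) :
    bostonRound R prio q μ t j = some s := by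
  simp [bostonRound, h]

lemma bostonRound_eq_some_iff (R : I → List (Option S)) (prio : S → List I) (q : S → ℕ)
    (μ : I → Option S) (t : ℕ) (j : I) (s : S) :
    bostonRound R prio q μ t j = some s ↔
      μ j = some s ∨ (μ j = none ∧ (acceptables (R j))[t]? = some s ∧
        j ∈ ((prio s).filter
            (fun j' => decide (μ j' = none ∧ (acceptables (R j'))[t]? = some s))).take
          (q s - (Finset.univ.filter (fun j' => μ j' = some s)).card)) := by
  unfold bostonRound
  cases hm : μ j with
  | some s' => simp [hm]
  | none =>
    cases ht : (acceptables (R j))[t]? with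
    | none => simp
    | some s' =>
      simp only [reduceCtorEq, true_and, false_or, Option.some_inj]
      constructor
      · intro h
        split_ifs at h with hmem
        injection h with h
        subst h
        exact ⟨rfl, hmem⟩
      · rintro ⟨rfl, hmem⟩
        rw [if_pos hmem]

lemma boston_first_choice
    (R Rh : I → List (Option S)) (prio : S → List I) (q : S → ℕ)
    (hprio : ∀ s, ValidPrio (prio s)) (i : I) (s : S)
    (hRh : ∀ j, j ≠ i → Rh j = R j)
    (hfirst : (acceptables (Rh i))[0]? = some s)
    (hblock : (Finset.univ.filter (fun j => Boston R prio q j = some s)).card < q s ∨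
      ∃ j : I, Boston R prio q j = some s ∧ prioLt (prio s) i j) :
    Boston Rh prio q i = some s := by
  classical
  have hSpos : 0 < Fintype.card S := Fintype.card_pos_iff.mpr ⟨s⟩
  have hround0 : ∀ (Rx : I → List (Option S)) (j : I),
      bostonRound Rx prio q (fun _ => none) 0 j = some s ↔
        ((acceptables (Rx j))[0]? = some s ∧
          j ∈ ((prio s).filter
              (fun j' => decide ((acceptables (Rx j'))[0]? = some s))).take (q s)) := by
    intro Rx j
    rw [bostonRound_eq_some_iff]
    simp
  set Lh := (prio s).filter (fun j' => decide ((acceptables (Rh j'))[0]? = some s)) with hLh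
  set L := (prio s).filter (fun j' => decide ((acceptables (R j'))[0]? = some s)) with hLdef
  have hiLh : i ∈ Lh := List.mem_filter.mpr ⟨(hprio s).2 i, by simp [hfirst]⟩
  by_cases hi : i ∈ Lh.take (q s)
  · have h1 : bostonRound Rh prio q (fun _ => none) 0 i = some s :=
      (hround0 Rh i).mpr ⟨hfirst, hi⟩
    have hiter : ∀ n : ℕ,
        (List.range (n + 1)).foldl (bostonRound Rh prio q) (fun _ => none) i = some s := by
      intro n
      induction n with
      | zero => simpa [show List.range 1 = [0] from rfl] using h1
      | succ m ihm =>
        rw [List.range_succ, List.foldl_append, List.foldl_cons, List.foldl_nil]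
        exact bostonRound_of_some _ _ _ _ _ ihm
    have h2 := hiter (Fintype.card S - 1)
    rw [Nat.sub_add_cancel hSpos] at h2
    exact h2
  · exfalso
    have htake : L.take (q s) = Lh.take (q s) :=
      take_filter_eq_of_agree (prio s) _ _ i
        (fun x hx => by rw [hRh x hx]) (by simp [hfirst]) (q s) hi
    set A := Lh.take (q s) with hA
    have hlen : q s ≤ Lh.length := by
      by_contra h
      push_neg at h
      rw [hA, List.take_of_length_le h.le] at hi
      exact hi hiLh
    have hAlen : A.length = q s := by rw [hA, List.length_take]; omega
    have hAsub : A.Sublist (prio s) := (List.take_sublist _ _).trans (List.filter_sublist)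
    have hAnd : A.Nodup := hAsub.nodup (hprio s).1
    have hbase : ∀ j, (List.range 1).foldl (bostonRound R prio q) (fun _ => none) j = some s
        ↔ j ∈ A := by
      intro j
      rw [show List.range 1 = [0] from rfl, List.foldl_cons, List.foldl_nil, hround0 R j]
      constructor
      · rintro ⟨-, hm⟩
        rwa [← hLdef, htake] at hm
      · intro hj
        have hjL : j ∈ L := List.take_subset _ _ (htake ▸ hj)
        refine ⟨?_, by rwa [← hLdef, htake]⟩
        have := (List.mem_filter.mp hjL).2
        simpa using this
    have hinv : ∀ n, ∀ j,
        (List.range (n + 1)).foldl (bostonRound R prio q) (fun _ => none) j = some s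
          ↔ j ∈ A := by
      intro n
      induction n with
      | zero => exact hbase
      | succ m ihm =>
        intro j
        rw [List.range_succ, List.foldl_append, List.foldl_cons, List.foldl_nil]
        set ν := (List.range (m + 1)).foldl (bostonRound R prio q) (fun _ => none) with hν
        rw [bostonRound_eq_some_iff]
        have hcount : (Finset.univ.filter (fun j' => ν j' = some s)).card = q s := by
          have hset : Finset.univ.filter (fun j' => ν j' = some s) = A.toFinset := by
            ext x
            simp [ihm x]
          rw [hset, List.toFinset_card_of_nodup hAnd, hAlen]
        rw [hcount, Nat.sub_self, List.take_zero]
        simp only [List.not_mem_nil, and_false, or_false]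
        exact ihm j
    have hfin : ∀ j, Boston R prio q j = some s ↔ j ∈ A := by
      intro j
      have h3 := hinv (Fintype.card S - 1) j
      rwa [Nat.sub_add_cancel hSpos] at h3
    rcases hblock with hlt | ⟨j, hj, hij⟩
    · have hset : Finset.univ.filter (fun j => Boston R prio q j = some s) = A.toFinset := by
        ext x
        simp [hfin x]
      rw [hset, List.toFinset_card_of_nodup hAnd, hAlen] at hlt
      exact lt_irrefl _ hlt
    · have hjA : j ∈ A := (hfin j).mp hj
      have hpw : Lh.Pairwise (fun a b => (prio s).idxOf a < (prio s).idxOf b) :=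
        List.Pairwise.sublist (List.filter_sublist) (nodup_pairwise_indexOf _ (hprio s).1)
      have hidrop : i ∈ Lh.drop (q s) := by
        rcases (List.mem_append.mp ((List.take_append_drop (q s) Lh).symm ▸ hiLh)) with h | h
        · exact absurd h hi
        · exact h
      have hpw2 := List.pairwise_append.mp
        ((List.take_append_drop (q s) Lh).symm ▸ hpw)
      have hlt2 : (prio s).idxOf j < (prio s).idxOf i := hpw2.2.2 j hjA i hidrop
      exact absurd hij (by simp only [prioLt, not_lt]; omega)

/-- Theorem 5(i): for `k > 1`, every blocking student for
`β^k(P,≻,q)` under `(P,≻,q)` is a manipulating student of `β^k` at `(P,≻,q)`. -/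
theorem blocking_student_manipulates_bostonk
    {I S : Type*} [Fintype I] [DecidableEq I] [Fintype S] [DecidableEq S]
    (hIS : Fintype.card S < Fintype.card I)
    (P : I → List (Option S)) (prio : S → List I) (q : S → ℕ)
    (hP : ∀ i, ValidPref (P i)) (hprio : ∀ s, ValidPrio (prio s))
    (k : ℕ) (hk : 1 < k) (i : I)
    (hb : BlockingStudent P prio q (Bostonk k P prio q) i) :
    ManipulatingStudent (fun R => Bostonk k R prio q) P i := by
  classical
  obtain ⟨s, hpref, hblock⟩ := hb
  set Q : List (Option S) := some s :: (P i).erase (some s) with hQ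
  have hQv : ValidPref Q := by
    constructor
    · rw [hQ, List.nodup_cons]
      exact ⟨fun h => ((hP i).1.mem_erase_iff.mp h).1 rfl, (hP i).1.erase _⟩
    · intro x
      by_cases hx : x = some s
      · subst hx
        exact List.mem_cons_self
      · exact List.mem_cons_of_mem _ ((List.mem_erase_of_ne hx).mpr ((hP i).2 x))
  refine ⟨Q, hQv, ?_⟩
  have hfirst : (acceptables (truncate (Function.update P i Q i) k))[0]? = some s := by
    rw [Function.update_self, acceptables_truncate]
    have hacc : ∃ X : List S, acceptables Q = s :: X := by
      refine ⟨((P i).erase (some s)).takeWhile Option.isSome |>.filterMap id, ?_⟩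
      show ((Q.takeWhile Option.isSome).filterMap id) = _
      rw [hQ]
      simp [List.takeWhile]
    obtain ⟨X, hX⟩ := hacc
    obtain ⟨m, rfl⟩ : ∃ m, k = m + 1 := ⟨k - 1, by omega⟩
    rw [hX, List.take_succ_cons]
    simp
  have hmain : Boston (fun j => truncate (Function.update P i Q j) k) prio q i = some s := by
    refine boston_first_choice (fun j => truncate (P j) k) _ prio q hprio i s ?_ hfirst ?_
    · intro j hj
      rw [Function.update_of_ne hj]
    · exact hblock
  have h2 : Bostonk k (Function.update P i Q) prio q i = some s := hmain
  show prefLt (P i) (Bostonk k (Function.update P i Q) prio q i) (Bostonk k P prio q i)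
  rw [h2]
  exact hpref


end SchoolChoice
end

section
/- Let (P,≻,q) be a problem and k > 1. If the constrained Boston mechanism β^k is not manipulable at (P,≻,q), then β^k(P,≻,q) is stable at (P,≻,q). -/
/-!
School choice framework following Bonkoungou–Nesterov,
"Reforms meet fairness concerns in school and college admissions".

Students `I` and schools `S` are finite types with `|I| > |S|`.
A strict preference relation of a student over `S ∪ {∅}` is represented by a list
of `Option S` containing every element exactly once (earlier = more preferred);
`none` is the outside option.  A strict priority order of a school is a list of
`I` containing every student exactly once (earlier = higher priority).
-/

namespace SchoolChoice

variable {I S : Type*} [Fintype I] [DecidableEq I] [Fintype S] [DecidableEq S]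

-- ### auxiliary lemmas

section beqlemmas
variable {α : Type*} [BEq α] [LawfulBEq α]


lemma idx_cons_self (a : α) (l : List α) : (a :: l).idxOf a = 0 := by
  simp [List.idxOf_cons]

lemma idx_cons_ne {a b : α} (h : b ≠ a) (l : List α) :
    (b :: l).idxOf a = l.idxOf a + 1 := by
  simp [List.idxOf_cons, beq_eq_false_iff_ne.2 h]

lemma idx_append_of_mem {a : α} {l₁ : List α} (l₂ : List α) (h : a ∈ l₁) :
    (l₁ ++ l₂).idxOf a = l₁.idxOf a := by
  induction l₁ with
  | nil => simp at h
  | cons b t ih =>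
    rcases eq_or_ne b a with rfl | hba
    · rw [List.cons_append, idx_cons_self, idx_cons_self]
    · have ht : a ∈ t := by rcases List.mem_cons.1 h with rfl | h'; exact absurd rfl hba.symm; exact h'
      rw [List.cons_append, idx_cons_ne hba, idx_cons_ne hba, ih ht]

lemma idx_append_of_not_mem {a : α} {l₁ : List α} (l₂ : List α) (h : a ∉ l₁) :
    (l₁ ++ l₂).idxOf a = l₁.length + l₂.idxOf a := by
  induction l₁ with
  | nil => simp
  | cons b t ih =>
    have hba : b ≠ a := fun hh => h (hh ▸ List.mem_cons_self)
    have ht : a ∉ t := fun hh => h (List.mem_cons_of_mem _ hh)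
    rw [List.cons_append, idx_cons_ne hba, ih ht, List.length_cons]
    omega

lemma idx_lt_length {a : α} {l : List α} (h : a ∈ l) : l.idxOf a < l.length := by
  induction l with
  | nil => simp at h
  | cons b t ih =>
    rcases eq_or_ne b a with rfl | hba
    · rw [idx_cons_self]; simp
    · have ht : a ∈ t := by rcases List.mem_cons.1 h with rfl | h'; exact absurd rfl hba.symm; exact h'
      rw [idx_cons_ne hba, List.length_cons]
      exact Nat.succ_lt_succ (ih ht)

end beqlemmas

lemma bostonRound_some (P : I → List (Option S)) (prio : S → List I) (q : S → ℕ)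
    (μ : I → Option S) (t : ℕ) (j : I) (s : S) (hj : μ j = some s) :
    bostonRound P prio q μ t j = some s := by
  unfold bostonRound; rw [hj]

lemma bostonRound_none_none (P : I → List (Option S)) (prio : S → List I) (q : S → ℕ)
    (μ : I → Option S) (t : ℕ) (j : I) (hj : μ j = none)
    (hg : (acceptables (P j))[t]? = none) :
    bostonRound P prio q μ t j = none := by
  unfold bostonRound; rw [hj]; simp only; rw [hg]

lemma bostonRound_none_some (P : I → List (Option S)) (prio : S → List I) (q : S → ℕ)
    (μ : I → Option S) (t : ℕ) (j : I) (s : S) (hj : μ j = none)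
    (hg : (acceptables (P j))[t]? = some s) :
    bostonRound P prio q μ t j =
      if j ∈ ((prio s).filter
            (fun m => decide (μ m = none ∧ (acceptables (P m))[t]? = some s))).take
          (q s - (Finset.univ.filter (fun m => μ m = some s)).card)
      then some s else none := by
  unfold bostonRound; rw [hj]; simp only; rw [hg]

lemma takeWhile_append_all {α} (p : α → Bool) (l₁ l₂ : List α) (h : ∀ x ∈ l₁, p x) :
    (l₁ ++ l₂).takeWhile p = l₁ ++ l₂.takeWhile p := by
  induction l₁ with
  | nil => rfl
  | cons a t ih =>
    rw [List.cons_append, List.takeWhile_cons_of_pos (h a (by simp)),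
      ih (fun x hx => h x (by simp [hx])), List.cons_append]

lemma acceptables_cons_some (s : S) (rest : List (Option S)) :
    acceptables (some s :: rest) = s :: acceptables rest := by
  unfold acceptables
  rw [List.takeWhile_cons_of_pos (by simp)]
  rfl

lemma mem_acceptables {p : List (Option S)} {s : S} (h : s ∈ acceptables p) :
    some s ∈ p.takeWhile Option.isSome := by
  unfold acceptables at h
  rcases List.mem_filterMap.1 h with ⟨a, ha, hid⟩
  cases hid; exact ha

/-- index-order lemma: positions in a prefix of a filter reflect priority order. -/
lemma filter_take_indexOf_lt (l : List I) (p : I → Bool) (n : ℕ) (hl : l.Nodup)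
    (j i : I) (hj : j ∈ (l.filter p).take n) (hi : i ∈ l.filter p)
    (hin : i ∉ (l.filter p).take n) : l.idxOf j < l.idxOf i := by
  induction l generalizing n with
  | nil => simp at hi
  | cons a t ih =>
    rw [List.nodup_cons] at hl
    by_cases ha : p a
    · rw [List.filter_cons_of_pos ha] at hj hi hin
      cases n with
      | zero => simp at hj
      | succ m =>
        rw [List.take_succ_cons] at hj hin
        have hia : i ≠ a := by rintro rfl; exact hin (List.mem_cons_self)
        rcases List.mem_cons.1 hj with rfl | hj'
        · rw [idx_cons_self, idx_cons_ne (Ne.symm hia)]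
          exact Nat.succ_pos _
        · have hjt : j ∈ t := List.mem_of_mem_filter (List.mem_of_mem_take hj')
          have hja : j ≠ a := fun h => hl.1 (h ▸ hjt)
          have hit : i ∈ t.filter p := by
            rcases List.mem_cons.1 hi with rfl | h
            · exact absurd rfl hia
            · exact h
          rw [idx_cons_ne (Ne.symm hja), idx_cons_ne (Ne.symm hia)]
          exact Nat.succ_lt_succ (ih _ hl.2 hj' hit (fun h => hin (List.mem_cons_of_mem _ h)))
    · rw [List.filter_cons_of_neg ha] at hj hi hin
      have hjt : j ∈ t := List.mem_of_mem_filter (List.mem_of_mem_take hj)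
      have hit : i ∈ t := List.mem_of_mem_filter hi
      have hja : j ≠ a := fun h => hl.1 (h ▸ hjt)
      have hia : i ≠ a := fun h => hl.1 (h ▸ hit)
      rw [idx_cons_ne (Ne.symm hja), idx_cons_ne (Ne.symm hia)]
      exact Nat.succ_lt_succ (ih _ hl.2 hj hi hin)

lemma indexOf_acceptables_lt (p : List (Option S)) (s : S)
    (hs : s ∈ acceptables p) : p.idxOf (some s) < p.idxOf none := by
  have hmem : some s ∈ p.takeWhile Option.isSome := mem_acceptables hs
  have hnone : (none : Option S) ∉ p.takeWhile Option.isSome := fun h => by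
    simpa using List.mem_takeWhile_imp h
  have hsplit : p.takeWhile Option.isSome ++ p.dropWhile Option.isSome = p :=
    List.takeWhile_append_dropWhile
  calc p.idxOf (some s)
      = (p.takeWhile Option.isSome ++ p.dropWhile Option.isSome).idxOf (some s) := by
        rw [hsplit]
    _ = (p.takeWhile Option.isSome).idxOf (some s) := idx_append_of_mem _ hmem
    _ < (p.takeWhile Option.isSome).length := idx_lt_length hmem
    _ ≤ (p.takeWhile Option.isSome).length + (p.dropWhile Option.isSome).idxOf none :=
        Nat.le_add_right _ _
    _ = (p.takeWhile Option.isSome ++ p.dropWhile Option.isSome).idxOf none :=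
        (idx_append_of_not_mem _ hnone).symm
    _ = p.idxOf none := by rw [hsplit]

lemma boston_persist (P : I → List (Option S)) (prio : S → List I) (q : S → ℕ)
    (ts : List ℕ) (ν : I → Option S) (i : I) (s : S) (h : ν i = some s) :
    (ts.foldl (bostonRound P prio q) ν) i = some s := by
  induction ts generalizing ν with
  | nil => exact h
  | cons t ts ih =>
    rw [List.foldl_cons]
    exact ih _ (bostonRound_some _ _ _ _ _ _ _ h)

lemma boston_acceptable (P : I → List (Option S)) (prio : S → List I) (q : S → ℕ)
    (ts : List ℕ) (ν : I → Option S)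
    (hν : ∀ j s, ν j = some s → s ∈ acceptables (P j)) :
    ∀ j s, (ts.foldl (bostonRound P prio q) ν) j = some s → s ∈ acceptables (P j) := by
  induction ts generalizing ν with
  | nil => exact hν
  | cons t ts ih =>
    rw [List.foldl_cons]
    apply ih
    intro j s h
    cases hj : ν j with
    | some s' =>
      rw [bostonRound_some _ _ _ _ _ _ _ hj] at h
      cases h
      exact hν j _ hj
    | none =>
      cases hg : (acceptables (P j))[t]? with
      | none => rw [bostonRound_none_none _ _ _ _ _ _ hj hg] at h; exact absurd h (by simp)
      | some s' =>
        rw [bostonRound_none_some _ _ _ _ _ _ _ hj hg] at h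
        split_ifs at h with hc
        cases h; exact List.mem_of_getElem? hg

lemma boston_full (P : I → List (Option S)) (prio : S → List I) (q : S → ℕ)
    (ts : List ℕ) (ν : I → Option S) (s : S) (T : List I)
    (hT : T.Nodup) (hlen : T.length = q s)
    (hν : ∀ j, ν j = some s ↔ j ∈ T) :
    ∀ j, (ts.foldl (bostonRound P prio q) ν) j = some s ↔ j ∈ T := by
  induction ts generalizing ν with
  | nil => exact hν
  | cons t ts ih =>
    rw [List.foldl_cons]
    apply ih
    intro j
    have hcount : (Finset.univ.filter (fun m => ν m = some s)).card = q s := by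
      rw [← hlen, ← List.toFinset_card_of_nodup hT]
      congr 1
      ext x
      simp [hν]
    constructor
    · intro h
      cases hj : ν j with
      | some s' =>
        rw [bostonRound_some _ _ _ _ _ _ _ hj] at h
        exact (hν j).1 (h ▸ hj)
      | none =>
        cases hg : (acceptables (P j))[t]? with
        | none => rw [bostonRound_none_none _ _ _ _ _ _ hj hg] at h; exact absurd h (by simp)
        | some s' =>
          rw [bostonRound_none_some _ _ _ _ _ _ _ hj hg] at h
          split_ifs at h with hc
          cases h
          rw [hcount, Nat.sub_self, List.take_zero] at hc
          simp at hc
    · intro h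
      rw [bostonRound_some _ _ _ _ _ _ _ ((hν j).2 h)]

lemma boston_round0 (P : I → List (Option S)) (prio : S → List I) (q : S → ℕ)
    (s : S) (j : I) :
    bostonRound P prio q (fun _ => none) 0 j = some s ↔
      j ∈ ((prio s).filter
        (fun m => decide ((acceptables (P m))[0]? = some s))).take (q s) := by
  cases hg : (acceptables (P j))[0]? with
  | none =>
    rw [bostonRound_none_none _ _ _ _ _ _ rfl hg]
    constructor
    · intro h; exact absurd h (by simp)
    · intro h
      have := List.of_mem_filter (List.mem_of_mem_take h)
      rw [hg] at this; simp at this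
  | some s' =>
    rw [bostonRound_none_some _ _ _ _ _ _ _ rfl hg]
    have hcount : (Finset.univ.filter (fun m : I => (fun _ => (none : Option S)) m = some s')).card
        = 0 := by simp
    have hfc : ((prio s').filter (fun m =>
          decide ((fun _ => (none : Option S)) m = none ∧ (acceptables (P m))[0]? = some s'))) =
        ((prio s').filter (fun m => decide ((acceptables (P m))[0]? = some s'))) :=
      List.filter_congr (fun m _ => by simp)
    rw [hcount, Nat.sub_zero, hfc]
    by_cases hss : s' = s
    · subst hss
      split_ifs with hc
      · simp [hc]
      · simp [hc]
    · constructor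
      · intro h
        split_ifs at h with hc
        cases h; exact absurd rfl hss
      · intro h
        have := List.of_mem_filter (List.mem_of_mem_take h)
        rw [hg] at this; simp at this
        exact absurd this hss

/-- Corollary 1(i): for `k > 1`, if the constrained Boston mechanism
`β^k` is not manipulable at `(P,≻,q)` then `β^k(P,≻,q)` is stable at `(P,≻,q)`. -/
theorem bostonk_not_manipulable_implies_stable
    {I S : Type*} [Fintype I] [DecidableEq I] [Fintype S] [DecidableEq S]
    (hIS : Fintype.card S < Fintype.card I)
    (P : I → List (Option S)) (prio : S → List I) (q : S → ℕ)
    (hP : ∀ i, ValidPref (P i)) (hprio : ∀ s, ValidPrio (prio s))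
    (k : ℕ) (hk : 1 < k)
    (hnm : NotManipulable (fun R => Bostonk k R prio q) P) :
    IsStable P prio q (Bostonk k P prio q) := by
  classical
  have hμeq : ∀ j, Bostonk k P prio q j =
      ((List.range (Fintype.card S)).foldl
        (bostonRound (fun m => truncate (P m) k) prio q) (fun _ => none)) j :=
    fun j => rfl
  have hacc : ∀ j s, Bostonk k P prio q j = some s → s ∈ acceptables (P j) := by
    intro j s h
    rw [hμeq j] at h
    have h1 : s ∈ acceptables (truncate (P j) k) :=
      boston_acceptable (fun m => truncate (P m) k) prio q _ _
        (fun j s h => by simp at h) j s h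
    rw [acceptables_truncate] at h1
    exact List.mem_of_mem_take h1
  constructor
  · -- individual rationality
    intro i
    cases hmi : Bostonk k P prio q i with
    | none => simp [prefLt]
    | some s =>
      have hs := indexOf_acceptables_lt (P i) s (hacc i s hmi)
      exact Nat.lt_asymm hs
  · -- no blocking student
    rintro i ⟨s, hpref, hblock⟩
    -- the manipulation report: rank s first
    set Q : List (Option S) := some s :: (P i).erase (some s) with hQdef
    have hQv : ValidPref Q := by
      constructor
      · rw [hQdef, List.nodup_cons]
        exact ⟨fun h => (((hP i).1.mem_erase_iff).1 h).1 rfl, (hP i).1.erase _⟩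
      · intro x
        rcases eq_or_ne x (some s) with rfl | hx
        · exact List.mem_cons_self
        · exact List.mem_cons_of_mem _ (((hP i).1.mem_erase_iff).2 ⟨hx, (hP i).2 x⟩)
    set R : I → List (Option S) := fun j => truncate (Function.update P i Q j) k with hRdef
    have hRne : ∀ m, m ≠ i → R m = truncate (P m) k := by
      intro m hm
      rw [hRdef]
      simp only [Function.update_of_ne hm]
    have hfirstR : (acceptables (R i))[0]? = some s := by
      rw [hRdef]
      simp only [Function.update_self]
      rw [acceptables_truncate, hQdef, acceptables_cons_some, List.getElem?_take]
      rw [if_pos (by omega)]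
      simp
    obtain ⟨n, hn⟩ : ∃ n, Fintype.card S = n + 1 :=
      ⟨Fintype.card S - 1, by have : 0 < Fintype.card S := Fintype.card_pos_iff.2 ⟨s⟩; omega⟩
    have hrange : List.range (Fintype.card S) = 0 :: (List.range n).map Nat.succ := by
      rw [hn]; exact List.range_succ_eq_map (n := n)
    set A : List I :=
      (prio s).filter (fun m => decide ((acceptables (R m))[0]? = some s)) with hAdef
    by_cases hcase : i ∈ A.take (q s)
    · -- i would be accepted at s in round 1: manipulation
      refine hnm i ⟨Q, hQv, ?_⟩
      have hres : Bostonk k (Function.update P i Q) prio q i = some s := by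
        show ((List.range (Fintype.card S)).foldl (bostonRound R prio q) (fun _ => none)) i
          = some s
        rw [hrange, List.foldl_cons]
        exact boston_persist _ _ _ _ _ _ _ ((boston_round0 R prio q s i).2 hcase)
      show prefLt (P i) (Bostonk k (Function.update P i Q) prio q i) (Bostonk k P prio q i)
      rw [hres]
      exact hpref
    · -- i rejected at round 1: school s fills with higher-priority students
      have hiA : i ∈ A := by
        rw [hAdef]
        exact List.mem_filter.2 ⟨(hprio s).2 i, by simp [hfirstR]⟩
      have hAnd : A.Nodup := by rw [hAdef]; exact (hprio s).1.filter _
      have hlenA : q s < A.length := by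
        by_contra hle
        push_neg at hle
        rw [List.take_of_length_le hle] at hcase
        exact hcase hiA
      have hTlen : (A.take (q s)).length = q s := by
        rw [List.length_take]; omega
      have hTnd : (A.take (q s)).Nodup := (List.take_sublist _ _).nodup hAnd
      set A₀ : List I := (prio s).filter
          (fun m => decide ((acceptables (truncate (P m) k))[0]? = some s)) with hA0def
      have hT0 : A₀.take (q s) = A.take (q s) := by
        by_cases hpi : (acceptables (truncate (P i) k))[0]? = some s
        · have hAA : A₀ = A := by
            rw [hA0def, hAdef]
            refine List.filter_congr fun m hm => ?_
            rcases eq_or_ne m i with rfl | hmi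
            · simp [hpi, hfirstR]
            · rw [hRne m hmi]
          rw [hAA]
        · have hAA : A₀ = A.erase i := by
            rw [hAnd.erase_eq_filter i, hAdef, hA0def, List.filter_filter]
            refine List.filter_congr fun m hm => ?_
            rcases eq_or_ne m i with rfl | hmi
            · simp [hpi]
            · rw [hRne m hmi]
              simp [hmi]
          have hsplitA : A.take (q s) ++ A.drop (q s) = A := List.take_append_drop _ _
          have herase : A.erase i = A.take (q s) ++ (A.drop (q s)).erase i := by
            conv_lhs => rw [← hsplitA]
            exact List.erase_append_right _ hcase
          rw [hAA, herase, List.take_left' hTlen]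
      -- everyone in the top q s of A₀ is matched to s in the true run
      have hround0 : ∀ j, bostonRound (fun m => truncate (P m) k) prio q (fun _ => none) 0 j
          = some s ↔ j ∈ A.take (q s) := by
        intro j
        rw [← hT0, hA0def]
        exact boston_round0 (fun m => truncate (P m) k) prio q s j
      have hfull : ∀ j, Bostonk k P prio q j = some s ↔ j ∈ A.take (q s) := by
        intro j
        rw [hμeq j, hrange, List.foldl_cons]
        exact boston_full _ prio q _ _ s _ hTnd hTlen hround0 j
      rcases hblock with hlt | ⟨j, hjs, hij⟩
      · have hcount : (Finset.univ.filter (fun j => Bostonk k P prio q j = some s)).card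
            = q s := by
          rw [← hTlen, ← List.toFinset_card_of_nodup hTnd]
          congr 1
          ext x
          simp [hfull]
        rw [hcount] at hlt
        exact lt_irrefl _ hlt
      · have hjT : j ∈ A.take (q s) := (hfull j).1 hjs
        have hidx : (prio s).idxOf j < (prio s).idxOf i := by
          rw [hAdef] at hjT hiA hcase
          exact filter_take_indexOf_lt (prio s) _ (q s) (hprio s).1 j i hjT hiA hcase
        exact Nat.lt_asymm hidx hij

end SchoolChoice
end
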